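/- Let G and H be connected non-trivial graphs with H not complete. If tn(G ∘ H) = 3 · tn(G), then G is not a complete graph. -/

import Mathlib

open SimpleGraph

/-- A walk `W` between `u` and `v` is a *tolled walk* if either `u = v` and `W` is trivial,
or `u` and `v` are adjacent and `W` is the single-edge walk, or `u ≠ v` are non-adjacent,
`W` has at least one interior vertex, `u` is adjacent exactly to the interior vertex
at position 1 and `v` exactly to the interior vertex at position `W.length - 1`. -/
def IsTolledWalk {V : Type*} (G : SimpleGraph V) {u v : V} (W : G.Walk u v) : Prop :=
  (u = v ∧ W.length = 0) ∨
  (G.Adj u v ∧ W.support = [u, v]) ∨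
  (¬ G.Adj u v ∧ u ≠ v ∧ 2 ≤ W.length ∧
    (∀ i, 0 < i → i < W.length → (G.Adj u (W.support.getD i u) ↔ i = 1)) ∧
    (∀ i, 0 < i → i < W.length → (G.Adj v (W.support.getD i u) ↔ i = W.length - 1)))

/-- The toll interval between `u` and `v`: vertices lying on some tolled walk. -/
def tollInterval {V : Type*} (G : SimpleGraph V) (u v : V) : Set V :=
  {x | ∃ W : G.Walk u v, IsTolledWalk G W ∧ x ∈ W.support}

/-- A toll set: the toll intervals between its pairs cover the vertex set. -/
def IsTollSet {V : Type*} (G : SimpleGraph V) (S : Set V) : Prop :=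
  ∀ x : V, ∃ u ∈ S, ∃ v ∈ S, x ∈ tollInterval G u v

/-- The toll number: minimum size of a toll set. -/
noncomputable def tollNumber {V : Type*} (G : SimpleGraph V) : ℕ :=
  sInf {n | ∃ S : Set V, S.Finite ∧ S.ncard = n ∧ IsTollSet G S}

/-- `v` is a cut vertex if deleting it disconnects the graph. -/
def IsCutVertex {V : Type*} (G : SimpleGraph V) (v : V) : Prop :=
  ¬ (G.induce {w | w ≠ v}).Preconnected

/-- The extreme vertices of `G` with respect to toll convexity. -/
def extremeVertices {V : Type*} (G : SimpleGraph V) : Set V :=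
  {s | ∀ x y : V, x ≠ s → y ≠ s → s ∉ tollInterval G x y}

/-- The lexicographic product of simple graphs. -/
def lexProd {V W : Type*} (G : SimpleGraph V) (H : SimpleGraph W) : SimpleGraph (V × W) where
  Adj a b := G.Adj a.1 b.1 ∨ (a.1 = b.1 ∧ H.Adj a.2 b.2)
  symm := by
    constructor
    rintro a b (h | ⟨h1, h2⟩)
    · exact Or.inl h.symm
    · exact Or.inr ⟨h1.symm, h2.symm⟩
  loopless := by
    constructor
    rintro a (h | ⟨_, h⟩)
    · exact G.loopless.1 _ h
    · exact H.loopless.1 _ h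


lemma top_tollSet_eq_univ {V : Type*} (S : Set V)
    (h : IsTollSet (⊤ : SimpleGraph V) S) : S = Set.univ := by
  ext x
  simp only [Set.mem_univ, iff_true]
  obtain ⟨u, hu, v, hv, W, hW, hx⟩ := h x
  rcases hW with ⟨rfl, hlen⟩ | ⟨hadj, hsupp⟩ | ⟨hnadj, hne, _⟩
  · have htail : W.support.tail.length = 0 := by
      have := W.length_support
      have htl : W.support.length = W.support.tail.length + 1 := by
        rw [W.support_eq_cons]; simp
      omega
    have : W.support = [u] := by
      rw [W.support_eq_cons, List.length_eq_zero_iff.mp htail]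
    rw [this] at hx
    simp at hx
    exact hx ▸ hu
  · rw [hsupp] at hx
    simp at hx
    rcases hx with rfl | rfl
    · exact hu
    · exact hv
  · exact absurd ((top_adj u v).mpr hne) hnadj

lemma univ_isTollSet {V : Type*} (G : SimpleGraph V) :
    IsTollSet G (Set.univ : Set V) := by
  intro x
  refine ⟨x, Set.mem_univ x, x, Set.mem_univ x, Walk.nil, Or.inl ⟨rfl, rfl⟩, ?_⟩
  simp

lemma tollNumber_top {V : Type*} [Fintype V] :
    tollNumber (⊤ : SimpleGraph V) = Fintype.card V := by
  have hset : {n | ∃ S : Set V, S.Finite ∧ S.ncard = n ∧ IsTollSet (⊤ : SimpleGraph V) S}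
      = {Fintype.card V} := by
    ext n
    simp only [Set.mem_setOf_eq, Set.mem_singleton_iff]
    constructor
    · rintro ⟨S, hSf, rfl, hS⟩
      rw [top_tollSet_eq_univ S hS, Set.ncard_univ, Nat.card_eq_fintype_card]
    · rintro rfl
      exact ⟨Set.univ, Set.finite_univ, by rw [Set.ncard_univ, Nat.card_eq_fintype_card],
        univ_isTollSet _⟩
  rw [tollNumber, hset, csInf_singleton]

lemma lexProd_tollSet_four {V W : Type*} [Nontrivial V] (H : SimpleGraph W)
    {h1 h2 : W} (hne : h1 ≠ h2) (hnadj : ¬ H.Adj h1 h2) {g1 g2 : V} (hg : g1 ≠ g2) :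
    IsTollSet (lexProd (⊤ : SimpleGraph V) H)
      ({(g1, h1), (g1, h2), (g2, h1), (g2, h2)} : Set (V × W)) := by
  have key : ∀ (a : V) (x : V × W), x.1 ≠ a →
      x ∈ tollInterval (lexProd (⊤ : SimpleGraph V) H) (a, h1) (a, h2) := by
    intro a x hxa
    have hax : (lexProd (⊤ : SimpleGraph V) H).Adj (a, h1) x :=
      Or.inl ((top_adj a x.1).mpr (Ne.symm hxa))
    have hxv : (lexProd (⊤ : SimpleGraph V) H).Adj x (a, h2) :=
      Or.inl ((top_adj x.1 a).mpr hxa)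
    refine ⟨Walk.cons hax (Walk.cons hxv Walk.nil), ?_, by simp⟩
    refine Or.inr (Or.inr ⟨?_, ?_, ?_, ?_, ?_⟩)
    · rintro (hadj | ⟨-, hadj⟩)
      · exact (⊤ : SimpleGraph V).loopless.1 a hadj
      · exact hnadj hadj
    · simp [Prod.ext_iff, hne]
    · simp
    · intro i hi0 hi2
      simp only [Walk.length_cons, Walk.length_nil] at hi2
      have : i = 1 := by omega
      subst this
      simpa using hax
    · intro i hi0 hi2
      simp only [Walk.length_cons, Walk.length_nil] at hi2
      have : i = 1 := by omega
      subst this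
      simpa using hxv.symm
  intro x
  by_cases hx1 : x.1 = g1
  · exact ⟨(g2, h1), by simp, (g2, h2), by simp,
      key g2 x (by rw [hx1]; exact hg)⟩
  · exact ⟨(g1, h1), by simp, (g1, h2), by simp, key g1 x hx1⟩

theorem stmt15 {V W : Type*} [Fintype V] [Fintype W] [Nontrivial V] [Nontrivial W]
    (G : SimpleGraph V) (H : SimpleGraph W)
    (hGc : G.Connected) (hHc : H.Connected) (hH : H ≠ ⊤)
    (heq : tollNumber (lexProd G H) = 3 * tollNumber G) :
    G ≠ ⊤ := by
  intro hG
  subst hG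
  obtain ⟨h1, h2, hne, hnadj⟩ : ∃ h1 h2 : W, h1 ≠ h2 ∧ ¬ H.Adj h1 h2 := by
    by_contra hc
    push_neg at hc
    apply hH
    ext x y
    simp only [top_adj]
    exact ⟨fun h => h.ne, fun h => hc x y h⟩
  obtain ⟨g1, g2, hg⟩ := exists_pair_ne V
  have hle : tollNumber (lexProd (⊤ : SimpleGraph V) H) ≤ 4 := by
    have hmem : (({(g1,h1),(g1,h2),(g2,h1),(g2,h2)} : Set (V × W)).ncard) ∈
        {n | ∃ S : Set (V × W), S.Finite ∧ S.ncard = n ∧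
          IsTollSet (lexProd (⊤ : SimpleGraph V) H) S} :=
      ⟨_, Set.toFinite _, rfl, lexProd_tollSet_four H hne hnadj hg⟩
    refine le_trans (Nat.sInf_le hmem) ?_
    have a1 := Set.ncard_insert_le (g1,h1) ({(g1,h2),(g2,h1),(g2,h2)} : Set (V × W))
    have a2 := Set.ncard_insert_le (g1,h2) ({(g2,h1),(g2,h2)} : Set (V × W))
    have a3 := Set.ncard_insert_le (g2,h1) ({(g2,h2)} : Set (V × W))
    have a4 := Set.ncard_singleton ((g2,h2) : V × W)
    omega
  have hcard : 2 ≤ Fintype.card V := Fintype.one_lt_card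
  rw [tollNumber_top] at heq
  omega
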